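/- Let m ≥ 2 and let x < m be a positive integer relatively prime to m, with Hirzebruch–Jung continued fraction expansion m/x = n_1 − 1/(n_2 − 1/(⋯ − 1/n_l)), all n_j ≥ 2. Let y < m be the unique positive integer with x·y ≡ 1 (mod m). Then the matrix product [[0, −1],[1, n_1]]·[[0, −1],[1, n_2]]⋯[[0, −1],[1, n_l]] equals [[(1 − xy)/m, −x],[y, m]]. -/

import Mathlib

/-- value of the Hirzebruch–Jung continued fraction `n₁ - 1/(n₂ - 1/(⋯ - 1/n_l))`
(the empty continued fraction has value `0`, and `1/0 = 0` in `ℚ` makes the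
singleton case evaluate to `n₁`). -/
def hjEval : List ℤ → ℚ
  | [] => 0
  | n :: ns => (n : ℚ) - 1 / hjEval ns

lemma hjEval_gt_one : ∀ ns : List ℤ, ns ≠ [] → (∀ n ∈ ns, 2 ≤ n) → 1 < hjEval ns
  | [], h, _ => absurd rfl h
  | n :: tail, _, hns => by
    have hn : 2 ≤ n := hns n (by simp)
    have hnq : (2:ℚ) ≤ (n:ℚ) := by exact_mod_cast hn
    cases tail with
    | nil =>
      show (1:ℚ) < (n:ℚ) - 1 / hjEval []
      simp [hjEval]
      linarith
    | cons t rest =>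
      have ih := hjEval_gt_one (t :: rest) (by simp) (fun k hk => hns k (by simp [hk]))
      have hv : (0:ℚ) < hjEval (t :: rest) := by linarith
      have h1 : 1 / hjEval (t :: rest) < 1 := by rw [div_lt_one hv]; exact ih
      have h2 : 0 < 1 / hjEval (t :: rest) := by positivity
      show (1:ℚ) < (n:ℚ) - 1 / hjEval (t :: rest)
      linarith

lemma hj_aux (ns : List ℤ) : ∀ m x y : ℤ, 2 ≤ m → 0 < x → x < m → Int.gcd x m = 1 →
    0 < y → y < m → m ∣ x * y - 1 → (∀ n ∈ ns, 2 ≤ n) → hjEval ns = (m : ℚ) / (x : ℚ) →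
    (ns.map fun n => !![0, -1; 1, n]).prod = !![(1 - x * y) / m, -x; y, m] := by
  induction ns with
  | nil =>
    intro m x y hm hx0 hxm hcop hy0 hym hxy hns hhj
    exfalso
    have hmq : (0:ℚ) < (m:ℚ) := by exact_mod_cast (by linarith : (0:ℤ) < m)
    have hxq : (0:ℚ) < (x:ℚ) := by exact_mod_cast hx0
    have hpos : (0:ℚ) < (m:ℚ)/(x:ℚ) := by positivity
    rw [show hjEval [] = 0 from rfl] at hhj
    linarith
  | cons n tail ih =>
    intro m x y hm hx0 hxm hcop hy0 hym hxy hns hhj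
    have hn : 2 ≤ n := hns n (by simp)
    have hxq : (0:ℚ) < (x:ℚ) := by exact_mod_cast hx0
    have hxq' : (x:ℚ) ≠ 0 := ne_of_gt hxq
    have hmne : m ≠ 0 := by omega
    have hhj' : (n : ℚ) - 1 / hjEval tail = (m:ℚ)/(x:ℚ) := hhj
    cases tail with
    | nil =>
      have h0 : hjEval ([] : List ℤ) = 0 := rfl
      rw [h0] at hhj'
      simp only [div_zero, sub_zero] at hhj'
      have hmx : (m:ℚ) = (n:ℚ) * (x:ℚ) := by field_simp at hhj'; linarith
      have hmxZ : m = n * x := by exact_mod_cast hmx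
      have hdvd : x ∣ m := Dvd.intro_left n hmxZ.symm
      have hx1 : x = 1 := by
        have h1 : x ∣ (Int.gcd x m : ℤ) := Int.dvd_coe_gcd dvd_rfl hdvd
        rw [hcop] at h1
        exact Int.eq_one_of_dvd_one (by omega) (by exact_mod_cast h1)
      have hy1 : y = 1 := by
        rw [hx1, one_mul] at hxy
        obtain ⟨k, hk⟩ := hxy
        rcases lt_trichotomy k 0 with h | h | h
        · nlinarith
        · subst h; simp at hk; omega
        · nlinarith
      subst hx1 hy1
      have hmn : m = n := by omega
      subst hmn
      simp only [List.map_cons, List.map_nil, List.prod_cons, List.prod_nil, mul_one]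
      norm_num
    | cons t rest =>
      set tl := (t :: rest : List ℤ) with htl
      have hv1 : 1 < hjEval tl :=
        hjEval_gt_one tl (by simp [htl]) (fun k hk => hns k (by simp [htl] at hk ⊢; tauto))
      have hv0 : (0:ℚ) < hjEval tl := by linarith
      have hvne : hjEval tl ≠ 0 := ne_of_gt hv0
      have hrecq : 1 / hjEval tl = ((n:ℚ)*(x:ℚ) - (m:ℚ))/(x:ℚ) := by
        field_simp at hhj' ⊢
        linarith
      set x' : ℤ := n * x - m with hx'
      have hx'q : ((x':ℤ):ℚ) = (n:ℚ)*(x:ℚ) - (m:ℚ) := by push_cast [hx']; ring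
      have hinv_pos : 0 < 1 / hjEval tl := by positivity
      have hinv_lt : 1 / hjEval tl < 1 := by rw [div_lt_one hv0]; exact hv1
      have hx'pos : 0 < x' := by
        have : (0:ℚ) < ((x':ℤ):ℚ) := by
          rw [hx'q]
          rw [hrecq, div_pos_iff] at hinv_pos
          rcases hinv_pos with ⟨h, _⟩ | ⟨_, h⟩
          · exact h
          · linarith
        exact_mod_cast this
      have hx'lt : x' < x := by
        have h2 : ((x':ℤ):ℚ) < (x:ℚ) := by
          rw [hrecq, div_lt_one hxq] at hinv_lt
          rw [hx'q]; exact hinv_lt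
        exact_mod_cast h2
      have hx2 : 2 ≤ x := by omega
      have hx'ne : ((x':ℤ):ℚ) ≠ 0 := by exact_mod_cast (by omega : x' ≠ 0)
      have hvval : hjEval tl = (x:ℚ) / ((x':ℤ):ℚ) := by
        rw [← one_div_one_div (hjEval tl), hrecq, ← hx'q, one_div_div]
      -- coprimality
      have hcop' : Int.gcd x' x = 1 := by
        rw [← Int.isCoprime_iff_gcd_eq_one] at hcop ⊢
        have h1 : IsCoprime (-m : ℤ) x := (hcop.symm).neg_left
        have h2 : IsCoprime (-m + x * n) x := h1.add_mul_left_left n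
        convert h2 using 2
        rw [hx']; ring
      -- the new y
      obtain ⟨k, hk⟩ := hxy
      have hk0 : 0 < k := by nlinarith
      have hklt : k < x := by nlinarith
      have hdvd' : x ∣ x' * k - 1 := ⟨n * k - y, by rw [hx']; linear_combination hk⟩
      have htail := ih x x' k hx2 hx'pos hx'lt hcop' hk0 hklt hdvd'
        (fun a ha => hns a (by simp [htl] at ha ⊢; tauto)) hvval
      have hdiv1 : (1 - x' * k) / x = y - n * k := by
        rw [show (1:ℤ) - x' * k = x * (y - n * k) from by rw [hx']; linear_combination -hk]
        exact Int.mul_ediv_cancel_left _ (by omega)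
      have hdiv2 : (1 - x * y) / m = -k := by
        rw [show (1:ℤ) - x * y = m * (-k) from by linear_combination -hk]
        exact Int.mul_ediv_cancel_left _ hmne
      rw [List.map_cons, List.prod_cons, htail, hdiv1, hdiv2]
      ext i j
      fin_cases i <;> fin_cases j <;>
        simp [Matrix.mul_apply, Fin.sum_univ_two, hx']

theorem hj_matrix_product (m x y : ℤ) (hm : 2 ≤ m)
    (hx0 : 0 < x) (hxm : x < m) (hcop : Int.gcd x m = 1)
    (hy0 : 0 < y) (hym : y < m) (hxy : m ∣ x * y - 1)
    (ns : List ℤ) (hns : ∀ n ∈ ns, 2 ≤ n) (hhj : hjEval ns = (m : ℚ) / (x : ℚ)) :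
    (ns.map fun n => !![0, -1; 1, n]).prod = !![(1 - x * y) / m, -x; y, m] := by
  exact hj_aux ns m x y hm hx0 hxm hcop hy0 hym hxy hns hhj
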